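/- (Cluster safety under worst-case braking, single lane.) Let a > 0, s > 0, N ≥ 2, and consider N vehicles on a single lane with initial positions p₁(0) > p₂(0) > ⋯ > p_N(0) (vehicle 1 is ahead) and initial speeds v₁, …, v_N ≥ 0, all of which brake simultaneously with deceleration a from time 0, so vehicle n has trajectory pos(p_n(0), v_n, t). If for every n ∈ {1, …, N−1} the initial gap satisfies p_n(0) − p_{n+1}(0) ≥ s + max(0, v_{n+1}² − v_n²)/(2a), then for all t ≥ 0 and all n ∈ {1, …, N−1}, pos(p_n(0), v_n, t) − pos(p_{n+1}(0), v_{n+1}, t) ≥ s; i.e. no collision occurs in the cluster in the worst case scenario. -/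

import Mathlib

/-- Braked trajectory: a vehicle with initial position `p` and initial speed `v ≥ 0`
braking at constant deceleration `a > 0` until it stops. -/
noncomputable def pos (a p v t : ℝ) : ℝ :=
  if t ≤ v / a then p + v * t - (a/2) * t^2 else p + v^2 / (2*a)

lemma pairwise_safe (a s p q v w t : ℝ) (ha : 0 < a) (hv : 0 ≤ v) (hw : 0 ≤ w)
    (ht : 0 ≤ t) (hg : p - q ≥ s + max 0 (w^2 - v^2) / (2*a)) :
    pos a p v t - pos a q w t ≥ s := by
  set M := max 0 (w^2 - v^2) with hM
  have hmax1 : (0:ℝ) ≤ M := le_max_left _ _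
  have hmax2 : w^2 - v^2 ≤ M := le_max_right _ _
  have h2a : (0:ℝ) < 2*a := by linarith
  have hG0 : (0:ℝ) ≤ M/(2*a) := div_nonneg hmax1 h2a.le
  unfold pos
  split_ifs with h1 h2 h2
  · -- both braking: a*t ≤ v, a*t ≤ w
    rw [le_div_iff₀ ha] at h1 h2
    have key : v * t - a/2 * t^2 - (w * t - a/2 * t^2) + M/(2*a)
        = (2*a*(v-w)*t + M)/(2*a) := by field_simp; ring
    have hnum : 0 ≤ 2*a*(v-w)*t + M := by
      rcases le_or_gt w v with hc | hc
      · nlinarith [mul_nonneg (mul_nonneg ha.le ht) (sub_nonneg.2 hc)]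
      · nlinarith [mul_nonneg (sub_nonneg.2 hc.le) (by nlinarith : (0:ℝ) ≤ v + w - 2*(t*a))]
    have hd := div_nonneg hnum h2a.le
    rw [← key] at hd
    linarith
  · -- leader braking, follower stopped: a*t ≤ v, w < a*t
    rw [le_div_iff₀ ha] at h1
    rw [not_le, div_lt_iff₀ ha] at h2
    have key : v * t - a/2 * t^2 - w^2/(2*a)
        = (2*a*v*t - a^2*t^2 - w^2)/(2*a) := by field_simp
    have hnum : 0 ≤ 2*a*v*t - a^2*t^2 - w^2 := by
      nlinarith [mul_nonneg (mul_nonneg ha.le ht) (sub_nonneg.2 h1),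
        mul_nonneg (sub_nonneg.2 h2.le) (by linarith : (0:ℝ) ≤ a*t + w)]
    have hd := div_nonneg hnum h2a.le
    rw [← key] at hd
    linarith
  · -- leader stopped, follower braking: v < a*t, a*t ≤ w
    rw [le_div_iff₀ ha] at h2
    rw [not_le, div_lt_iff₀ ha] at h1
    have key : v^2/(2*a) - (w * t - a/2 * t^2) + M/(2*a)
        = (v^2 - 2*a*w*t + a^2*t^2 + M)/(2*a) := by field_simp; ring
    have hnum : 0 ≤ v^2 - 2*a*w*t + a^2*t^2 + M := by
      nlinarith [sq_nonneg (a*t - w)]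
    have hd := div_nonneg hnum h2a.le
    rw [← key] at hd
    linarith
  · -- both stopped
    have key : v^2/(2*a) - w^2/(2*a) + M/(2*a) = (v^2 - w^2 + M)/(2*a) := by ring
    have hnum : (0:ℝ) ≤ v^2 - w^2 + M := by linarith
    have hd := div_nonneg hnum h2a.le
    rw [← key] at hd
    linarith

/-- Cluster safety under worst-case braking on a single lane: `N ≥ 2` vehicles,
vehicle `1` ahead (`p 1 > p 2 > ⋯ > p N`), all brake simultaneously with
deceleration `a`. If every consecutive initial gap is at least
`s + max(0, v_{n+1}² − v_n²)/(2a)`, then no consecutive gap ever drops below `s`,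
i.e. no collision occurs in the cluster in the worst case scenario. -/
theorem cluster_worst_case_braking_safety (a s : ℝ) (N : ℕ) (p v : ℕ → ℝ)
    (ha : 0 < a) (hs : 0 < s) (hN : 2 ≤ N)
    (hv : ∀ n, 1 ≤ n → n ≤ N → 0 ≤ v n)
    (hp : ∀ n, 1 ≤ n → n < N → p n > p (n+1))
    (hgap : ∀ n, 1 ≤ n → n < N →
      p n - p (n+1) ≥ s + max 0 ((v (n+1))^2 - (v n)^2) / (2*a)) :
    ∀ t ≥ (0:ℝ), ∀ n, 1 ≤ n → n < N →
      pos a (p n) (v n) t - pos a (p (n+1)) (v (n+1)) t ≥ s := by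
  intro t ht n h1 h2
  exact pairwise_safe a s (p n) (p (n+1)) (v n) (v (n+1)) t ha
    (hv n h1 (le_of_lt h2)) (hv (n+1) (by omega) (by omega)) ht (hgap n h1 h2)
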